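/- (Erdős–Rényi network.) Fix r > 2 and a sequence p : ℕ → [0,1] such that for every N, either p(N) ≤ 1/Nʳ or p(N) ≥ 1 − 1/Nʳ. For each N, let G ∈ ℝ^{N×N} be a random matrix with G_ii = 0 for all i and with the off-diagonal entries {G_ij : i ≠ j} being independent Bernoulli random variables taking value 1 with probability p(N) and value 0 otherwise. Then for every δ > 0 and t > 0 there exists N₀ such that for all N ≥ N₀, with probability at least 1 − δ, ‖G − Gᵀ‖∞ ≤ 2/N^{r−1} + t. -/

import Mathlib

open MeasureTheory ProbabilityTheory

/-- **Erdős–Rényi network.** Fix `r > 2` and edge probabilities `p(N)` with `p(N) ≤ 1/Nʳ` or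
`p(N) ≥ 1 − 1/Nʳ` for all `N`. For each `N`, let `G` be a random `N×N` matrix with zero diagonal
and i.i.d.-independent Bernoulli(`p(N)`) off-diagonal entries. Then for every `δ > 0` and `t > 0`
there exists `N₀` such that for all `N ≥ N₀`, with probability at least `1 − δ`,
`‖G − Gᵀ‖∞ ≤ 2/N^{r−1} + t`. -/
lemma aux_const_bound {Ω : Type*} [MeasurableSpace Ω] (μ : Measure Ω) [IsProbabilityMeasure μ]
    (N : ℕ) (G : Ω → Matrix (Fin N) (Fin N) ℝ)
    (hmeas : ∀ i j, Measurable fun ω => G ω i j)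
    (v : ℝ) (ε : ENNReal)
    (hbad : ∀ i j : Fin N, i ≠ j → μ {ω | ¬ G ω i j = v} ≤ ε)
    (c : ℝ) (hc : 0 ≤ c) :
    1 - (N * N : ℕ) * ε ≤ μ {ω | (⨆ i : Fin N, ∑ j, |G ω i j - G ω j i|) ≤ c} := by
  set B : Set Ω := ⋃ i : Fin N, ⋃ j : Fin N, {ω | i ≠ j ∧ ¬ G ω i j = v} with hB
  have hmB : MeasurableSet B := by
    refine MeasurableSet.iUnion fun i => MeasurableSet.iUnion fun j => ?_
    by_cases h : i = j
    · simp [h]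
    · have : {ω | i ≠ j ∧ ¬ G ω i j = v} = (fun ω => G ω i j) ⁻¹' {v}ᶜ := by
        ext ω; simp [h]
      rw [this]
      exact (hmeas i j) (measurableSet_singleton v).compl
  have hμB : μ B ≤ (N * N : ℕ) * ε := by
    calc μ B ≤ ∑ i : Fin N, μ (⋃ j : Fin N, {ω | i ≠ j ∧ ¬ G ω i j = v}) :=
          measure_iUnion_fintype_le _ _
      _ ≤ ∑ i : Fin N, ∑ j : Fin N, μ {ω | i ≠ j ∧ ¬ G ω i j = v} :=
          Finset.sum_le_sum fun i _ => measure_iUnion_fintype_le _ _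
      _ ≤ ∑ _i : Fin N, ∑ _j : Fin N, ε := by
          refine Finset.sum_le_sum fun i _ => Finset.sum_le_sum fun j _ => ?_
          by_cases h : i = j
          · simp [h]
          · refine le_trans (measure_mono ?_) (hbad i j h)
            intro ω hω; exact hω.2
      _ = (N * N : ℕ) * ε := by simp [Finset.sum_const, mul_assoc]
  have hsub : Bᶜ ⊆ {ω | (⨆ i : Fin N, ∑ j, |G ω i j - G ω j i|) ≤ c} := by
    intro ω hω
    simp only [hB, Set.compl_iUnion, Set.mem_iInter] at hω
    have hall : ∀ i j : Fin N, i ≠ j → G ω i j = v := by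
      intro i j hij
      have := hω i j
      simp only [Set.mem_compl_iff, Set.mem_setOf_eq, not_and, not_not] at this
      exact this hij
    have hzero : ∀ i j : Fin N, G ω i j - G ω j i = 0 := by
      intro i j
      by_cases h : i = j
      · subst h; ring
      · rw [hall i j h, hall j i (Ne.symm h)]; ring
    have : (⨆ i : Fin N, ∑ j, |G ω i j - G ω j i|) ≤ c := by
      refine Real.iSup_le (fun i => ?_) hc
      have : ∀ j, |G ω i j - G ω j i| = 0 := fun j => by rw [hzero i j]; simp
      simp [this, hc]
    exact this
  calc (1 : ENNReal) - (N * N : ℕ) * ε ≤ 1 - μ B := tsub_le_tsub_left hμB 1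
    _ = μ Bᶜ := (prob_compl_eq_one_sub hmB).symm
    _ ≤ _ := measure_mono hsub

theorem erdos_renyi_asymmetry_bound
    {Ω : Type*} [MeasurableSpace Ω] (μ : Measure Ω) [IsProbabilityMeasure μ]
    (r : ℝ) (hr : 2 < r)
    (p : ℕ → ℝ) (hp01 : ∀ N, p N ∈ Set.Icc (0 : ℝ) 1)
    (hp : ∀ N : ℕ, p N ≤ 1 / (N : ℝ) ^ r ∨ 1 - 1 / (N : ℝ) ^ r ≤ p N)
    (G : (N : ℕ) → Ω → Matrix (Fin N) (Fin N) ℝ)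
    (hmeas : ∀ N (i j : Fin N), Measurable fun ω => G N ω i j)
    (hdiag : ∀ N (ω : Ω) (i : Fin N), G N ω i i = 0)
    (hval : ∀ N (ω : Ω) (i j : Fin N), i ≠ j → G N ω i j = 0 ∨ G N ω i j = 1)
    (hbern : ∀ N (i j : Fin N), i ≠ j →
      μ {ω | G N ω i j = 1} = ENNReal.ofReal (p N))
    (hindep : ∀ N : ℕ, iIndepFun
      (fun (q : {q : Fin N × Fin N // q.1 ≠ q.2}) ω => G N ω q.1.1 q.1.2) μ) :
    ∀ δ : ℝ, 0 < δ → ∀ t : ℝ, 0 < t → ∃ N₀ : ℕ, ∀ N, N₀ ≤ N →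
      ENNReal.ofReal (1 - δ) ≤
        μ {ω | (⨆ i : Fin N, ∑ j, |G N ω i j - G N ω j i|) ≤ 2 / (N : ℝ) ^ (r - 1) + t} := by
  intro δ hδ t ht
  have hr2 : 0 < r - 2 := by linarith
  have htend : Filter.Tendsto (fun N : ℕ => (N : ℝ) ^ (r - 2)) Filter.atTop Filter.atTop :=
    (tendsto_rpow_atTop hr2).comp tendsto_natCast_atTop_atTop
  obtain ⟨M, hM⟩ := Filter.eventually_atTop.mp (htend.eventually_ge_atTop (1 / δ))
  refine ⟨max M 1, fun N hN => ?_⟩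
  have hN1 : 1 ≤ N := le_trans (le_max_right _ _) hN
  have hNpos : (0 : ℝ) < N := by exact_mod_cast hN1
  have hNr : 1 / δ ≤ (N : ℝ) ^ (r - 2) := hM N (le_trans (le_max_left _ _) hN)
  have hNrpos : (0 : ℝ) < (N : ℝ) ^ r := Real.rpow_pos_of_pos hNpos r
  -- the constant c is nonneg
  have hc : (0 : ℝ) ≤ 2 / (N : ℝ) ^ (r - 1) + t := by
    have : (0 : ℝ) ≤ 2 / (N : ℝ) ^ (r - 1) :=
      div_nonneg (by norm_num) (Real.rpow_nonneg hNpos.le _)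
    linarith
  set ε : ENNReal := ENNReal.ofReal (1 / (N : ℝ) ^ r) with hε
  -- per-pair bad-event bound, for the appropriate constant v
  have key : ∃ v : ℝ, ∀ i j : Fin N, i ≠ j → μ {ω | ¬ G N ω i j = v} ≤ ε := by
    rcases hp N with h | h
    · refine ⟨0, fun i j hij => ?_⟩
      have hset : {ω | ¬ G N ω i j = 0} = {ω | G N ω i j = 1} := by
        ext ω
        constructor
        · intro hω
          rcases hval N ω i j hij with h0 | h1
          · exact absurd h0 hω
          · exact h1
        · intro hω
          simp only [Set.mem_setOf_eq] at hω ⊢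
          rw [hω]; norm_num
      rw [hset, hbern N i j hij]
      exact ENNReal.ofReal_le_ofReal h
    · refine ⟨1, fun i j hij => ?_⟩
      have hset : {ω | ¬ G N ω i j = 1} = {ω | G N ω i j = 1}ᶜ := rfl
      have hm1 : MeasurableSet {ω | G N ω i j = 1} :=
        (hmeas N i j) (measurableSet_singleton 1)
      rw [hset, prob_compl_eq_one_sub hm1, hbern N i j hij]
      have : (1 : ENNReal) - ENNReal.ofReal (p N) = ENNReal.ofReal (1 - p N) := by
        rw [← ENNReal.ofReal_one, ← ENNReal.ofReal_sub _ (hp01 N).1]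
      rw [this]
      exact ENNReal.ofReal_le_ofReal (by linarith)
  obtain ⟨v, hv⟩ := key
  have main := aux_const_bound μ N (G N) (hmeas N) v ε hv _ hc
  refine le_trans ?_ main
  -- it remains: ofReal (1 - δ) ≤ 1 - (N*N) * ε
  have hεbound : ((N * N : ℕ) : ENNReal) * ε ≤ ENNReal.ofReal δ := by
    have hcast : ((N * N : ℕ) : ENNReal) = ENNReal.ofReal ((N : ℝ) * N) := by
      rw [← ENNReal.ofReal_natCast]; push_cast; ring_nf
    rw [hε, hcast, ← ENNReal.ofReal_mul (by positivity)]
    refine ENNReal.ofReal_le_ofReal ?_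
    have hsplit : (N : ℝ) ^ r = (N : ℝ) ^ (r - 2) * ((N : ℝ) * N) := by
      rw [show r = (r - 2) + 2 by ring, Real.rpow_add hNpos]
      rw [show ((2:ℝ)) = ((2:ℕ):ℝ) by norm_num, Real.rpow_natCast]
      ring_nf
    have hpow_pos : (0 : ℝ) < (N : ℝ) ^ (r - 2) := Real.rpow_pos_of_pos hNpos _
    have h1 : (N : ℝ) * N * (1 / (N : ℝ) ^ r) = 1 / (N : ℝ) ^ (r - 2) := by
      rw [hsplit]; field_simp
    rw [h1]
    have h2 : (0:ℝ) < 1 / δ := by positivity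
    calc (1:ℝ) / (N : ℝ) ^ (r - 2) ≤ 1 / (1 / δ) := one_div_le_one_div_of_le h2 hNr
      _ = δ := by field_simp
  by_cases hδ1 : 1 - δ ≤ 0
  · simp [ENNReal.ofReal_of_nonpos hδ1]
  push_neg at hδ1
  have hδle1 : δ ≤ 1 := by linarith
  have h3 : ENNReal.ofReal (1 - δ) = 1 - ENNReal.ofReal δ := by
    rw [← ENNReal.ofReal_one, ← ENNReal.ofReal_sub _ hδ.le]
  rw [h3]
  exact tsub_le_tsub_left hεbound 1
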